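/- The map f from admissible continued fractions to LR-strings is order-preserving: if v = [k_0,…,k_m] and v' = [k'_0,…,k'_n] are admissible continued fractions with rational values v < v', then r(f(v)) < r(f(v')), where f([q_0,…,q_m]) = S(q_0,…,q_{m−1},q_m − 1). -/

import Mathlib

open List

/-- `r`-value of an LR-string (`true` = R, `false` = L):
`r(ε) = 1`, `r(SL) = r(S) - 2^(-|SL|)`, `r(SR) = r(S) + 2^(-|SR|)`. -/
def rval (S : List Bool) : ℚ :=
  1 + ∑ i ∈ Finset.range S.length,
      (if S.getD i false then ((2:ℚ)^(i+1))⁻¹ else -((2:ℚ)^(i+1))⁻¹)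

/-- Generalized strings: LR-strings plus the formal symbols `R⁻¹ = inv true`
and `L⁻¹ = inv false`. -/
inductive Gen where
  | inv : Bool → Gen
  | str : List Bool → Gen
deriving DecidableEq

/-- Left parent: `P_L(ε) = R⁻¹`, `P_L(SL) = P_L(S)`, `P_L(SR) = S`. -/
def PL (S : List Bool) : Gen :=
  match S.reverse.dropWhile (· = false) with
  | [] => Gen.inv true
  | _ :: t => Gen.str t.reverse

/-- Right parent: `P_R(ε) = L⁻¹`, `P_R(SL) = S`, `P_R(SR) = P_R(S)`. -/
def PR (S : List Bool) : Gen :=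
  match S.reverse.dropWhile (· = true) with
  | [] => Gen.inv false
  | _ :: t => Gen.str t.reverse

/-- Extension of `r` to generalized strings: `r(R⁻¹) = 0`, `r(L⁻¹) = 2`. -/
def rg : Gen → ℚ
  | Gen.inv true => 0
  | Gen.inv false => 2
  | Gen.str S => rval S

/-- Length of a generalized string; the formal symbols have length `-1`. -/
def glen : Gen → ℤ
  | Gen.inv _ => -1
  | Gen.str S => S.length

/-- Position function: `N(ε) = 0`, `N(SL) = 2N(S)+1`, `N(SR) = 2N(S)+2`. -/
def posN (S : List Bool) : ℕ :=
  ∑ i ∈ Finset.range S.length, (if S.getD i false then 2 else 1) * 2^(S.length - 1 - i)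

/-- The alternating-block string `S(k₀,…,k_m) = R^{k₀} L^{k₁} R^{k₂} ⋯`. -/
def blockStr (ks : List ℕ) : List Bool :=
  (ks.zipIdx.map (fun p => List.replicate p.1 (decide (p.2 % 2 = 0)))).flatten

/-- Continued fraction `[q₀,…,q_m]`. -/
def cf : List ℚ → ℚ
  | [] => 0
  | [q] => q
  | q :: qs => q + (cf qs)⁻¹

/-- Admissible continued-fraction index sequences: `[q₀]` with `q₀ ≥ 1`, or
`[q₀,…,q_m]` with `m ≥ 1`, intermediate `qᵢ ≥ 1`, and `q_m ≥ 2`. -/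
def CFAdmissible (qs : List ℕ) : Prop :=
  qs ≠ [] ∧ (qs.length = 1 → 1 ≤ qs.getD 0 0) ∧
    (∀ i, 1 ≤ i → i + 1 < qs.length → 1 ≤ qs.getD i 0) ∧
    (2 ≤ qs.length → 2 ≤ qs.getLastD 0)

/-- The map `f([q₀,…,q_m]) = S(q₀,…,q_{m-1},q_m - 1)`. -/
def cfToStr (qs : List ℕ) : List Bool :=
  blockStr (qs.dropLast ++ [qs.getLastD 0 - 1])


/-! ### Auxiliary development -/

section Aux

lemma rval_nil' : rval [] = 1 := by simp [rval]

lemma rval_cons' (b : Bool) (T : List Bool) :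
    rval (b :: T) = if b then 1 + rval T / 2 else rval T / 2 := by
  unfold rval
  rw [show (b :: T).length = T.length + 1 from rfl, Finset.sum_range_succ']
  simp only [List.getD_cons_succ, List.getD_cons_zero]
  rw [show (∑ i ∈ Finset.range T.length,
      (if T.getD i false then ((2:ℚ)^(i+1+1))⁻¹ else -((2:ℚ)^(i+1+1))⁻¹))
      = (∑ i ∈ Finset.range T.length,
      (if T.getD i false then ((2:ℚ)^(i+1))⁻¹ else -((2:ℚ)^(i+1))⁻¹)) / 2 from ?_]
  · cases b <;> simp <;> ring
  · rw [Finset.sum_div]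
    refine Finset.sum_congr rfl fun i _ => ?_
    split <;> · rw [pow_succ]; field_simp

/-- Blocks of `b`'s and `!b`'s alternating, starting with `b`. -/
def bstr : List ℕ → Bool → List Bool
  | [], _ => []
  | m :: rest, b => List.replicate m b ++ bstr rest (!b)

/-- Recursive formula for `rval ∘ bstr`. -/
def gf : List ℕ → Bool → ℚ
  | [], _ => 1
  | m :: rest, b =>
      if b then 2 - ((2:ℚ)^m)⁻¹ * (2 - gf rest false)
      else ((2:ℚ)^m)⁻¹ * gf rest true

/-- Value of the continued fraction whose adjusted sequence is the given list. -/
def Wv : List ℕ → ℚ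
  | [] => 1
  | m :: rest => m + (Wv rest)⁻¹

lemma rval_replicate_append (k : ℕ) (b : Bool) (T : List Bool) :
    rval (List.replicate k b ++ T)
      = if b then 2 - ((2:ℚ)^k)⁻¹ * (2 - rval T) else ((2:ℚ)^k)⁻¹ * rval T := by
  induction k with
  | zero => cases b <;> simp
  | succ k ih =>
    rw [List.replicate_succ, List.cons_append, rval_cons', ih]
    have h2 : ((2:ℚ)^k) ≠ 0 := by positivity
    cases b <;> simp only [if_true, if_false, Bool.false_eq_true] <;>
      · rw [pow_succ]; field_simp; try ring

lemma rval_bstr (ms : List ℕ) (b : Bool) : rval (bstr ms b) = gf ms b := by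
  induction ms generalizing b with
  | nil => simp [bstr, gf, rval]
  | cons m rest ih =>
    rw [bstr, gf, rval_replicate_append, ih]
    cases b <;> simp

lemma blockStr_aux (ks : List ℕ) (n : ℕ) :
    ((ks.zipIdx n).map (fun p => List.replicate p.1 (decide (p.2 % 2 = 0)))).flatten
      = bstr ks (decide (n % 2 = 0)) := by
  induction ks generalizing n with
  | nil => simp [bstr]
  | cons m rest ih =>
    rw [List.zipIdx_cons, List.map_cons, List.flatten_cons, ih (n+1), bstr]
    congr 2
    rcases Nat.even_or_odd n with h | h
    · simp [Nat.even_iff.mp h, Nat.succ_mod_two_eq_one_iff.mpr (Nat.even_iff.mp h)]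
    · simp [Nat.odd_iff.mp h, Nat.succ_mod_two_eq_zero_iff.mpr (Nat.odd_iff.mp h)]

lemma blockStr_eq_bstr (ks : List ℕ) : blockStr ks = bstr ks true := by
  have := blockStr_aux ks 0
  simpa [blockStr] using this

lemma gf_bounds : ∀ ms : List ℕ, ms ≠ [] → (∀ x ∈ ms, 1 ≤ x) →
    0 < gf ms false ∧ gf ms false < 1 ∧ 1 < gf ms true ∧ gf ms true < 2 := by
  intro ms
  induction ms with
  | nil => intro h; exact absurd rfl h
  | cons m rest ih =>
    intro _ hall
    have hm : 1 ≤ m := hall m (by simp)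
    have h2m : (0:ℚ) < ((2:ℚ)^m)⁻¹ := by positivity
    have h2m1 : ((2:ℚ)^m)⁻¹ ≤ 1/2 := by
      have : (2:ℚ)^1 ≤ 2^m := pow_le_pow_right₀ (by norm_num) hm
      rw [pow_one] at this
      rw [show (1:ℚ)/2 = (2:ℚ)⁻¹ by norm_num]
      exact inv_anti₀ (by norm_num) this
    rcases eq_or_ne rest [] with rfl | hne
    · simp only [gf, if_true, if_false]
      refine ⟨by simpa using h2m, by simpa using by linarith,
        by simpa using by linarith, by simpa using by linarith⟩
    · obtain ⟨hf0, hf1, ht1, ht2⟩ := ih hne (fun x hx => hall x (by simp [hx]))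
      simp only [gf]
      norm_num
      refine ⟨by positivity, ?_, ?_, ?_⟩
      · calc ((2:ℚ)^m)⁻¹ * gf rest true < ((2:ℚ)^m)⁻¹ * 2 :=
              mul_lt_mul_of_pos_left ht2 h2m
          _ ≤ (1/2) * 2 := by nlinarith
          _ = 1 := by norm_num
      · nlinarith
      · nlinarith

lemma Wv_gt_one : ∀ ms : List ℕ, ms ≠ [] → (∀ x ∈ ms, 1 ≤ x) → 1 < Wv ms := by
  intro ms
  induction ms with
  | nil => intro h; exact absurd rfl h
  | cons m rest ih =>
    intro _ hall
    have hm : (1:ℚ) ≤ m := by exact_mod_cast hall m (by simp)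
    rcases eq_or_ne rest [] with rfl | hne
    · have hm' : 1 ≤ m := hall m (by simp)
      simp only [Wv, inv_one]
      have : (1:ℚ) ≤ (m:ℚ) := by exact_mod_cast hm'
      linarith
    · have := ih hne (fun x hx => hall x (by simp [hx]))
      simp only [Wv]
      have : 0 < (Wv rest)⁻¹ := by positivity
      linarith

lemma Wv_cons_lt (m : ℕ) (rest : List ℕ) (hne : rest ≠ []) (hall : ∀ x ∈ rest, 1 ≤ x) :
    (m:ℚ) < Wv (m :: rest) ∧ Wv (m :: rest) < m + 1 := by
  have h1 := Wv_gt_one rest hne hall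
  have h0 : (0:ℚ) < Wv rest := by linarith
  constructor
  · simp only [Wv]
    have h2 : 0 < (Wv rest)⁻¹ := by positivity
    linarith
  · simp only [Wv]
    have : (Wv rest)⁻¹ < 1 := by rw [inv_lt_one_iff₀]; right; exact h1
    linarith

lemma inv_pow_lt' {m m' : ℕ} (h : m < m') : ((2:ℚ)^m')⁻¹ < ((2:ℚ)^m)⁻¹ := by
  apply inv_strictAnti₀ (by positivity)
  exact pow_lt_pow_right₀ (by norm_num) h

lemma inv_pow_le' {m m' : ℕ} (h : m ≤ m') : ((2:ℚ)^m')⁻¹ ≤ ((2:ℚ)^m)⁻¹ := by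
  apply inv_anti₀ (by positivity)
  exact pow_le_pow_right₀ (by norm_num) h

lemma inv_pow_two_le' {m m' : ℕ} (h : m < m') : 2 * ((2:ℚ)^m')⁻¹ ≤ ((2:ℚ)^m)⁻¹ := by
  have hle : ((2:ℚ)^(m'-1))⁻¹ ≤ ((2:ℚ)^m)⁻¹ := inv_pow_le' (by omega)
  have he : (2:ℚ)^m' = 2 * (2:ℚ)^(m'-1) := by
    rw [← pow_succ']; congr 1; omega
  rw [he, mul_inv]
  have hp : (0:ℚ) < ((2:ℚ)^(m'-1))⁻¹ := by positivity
  calc 2 * (2⁻¹ * ((2:ℚ)^(m'-1))⁻¹) = ((2:ℚ)^(m'-1))⁻¹ := by ring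
    _ ≤ ((2:ℚ)^m)⁻¹ := hle

lemma Wv_single (m : ℕ) : Wv [m] = m + 1 := by simp [Wv]

lemma main_ind : ∀ n : ℕ, ∀ ms ms' : List ℕ, ms.length + ms'.length ≤ n →
    ms ≠ [] → ms' ≠ [] →
    ((∀ x ∈ ms.tail, 1 ≤ x) → (∀ x ∈ ms'.tail, 1 ≤ x) → Wv ms < Wv ms' →
        gf ms true < gf ms' true) ∧
    ((∀ x ∈ ms, 1 ≤ x) → (∀ x ∈ ms', 1 ≤ x) → Wv ms < Wv ms' →
        gf ms' false < gf ms false) := by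
  intro n
  induction n with
  | zero => intro ms ms' hlen hne _; simp [List.length_eq_zero_iff] at hlen; exact absurd hlen.1 hne
  | succ n ih =>
    rintro ⟨⟩ ms' hlen hne hne'
    · exact absurd rfl hne
    rename_i m rest
    rcases ms' with _ | ⟨m', rest'⟩
    · exact absurd rfl hne'
    simp only [List.length_cons] at hlen
    have ha : (0:ℚ) < ((2:ℚ)^m)⁻¹ := by positivity
    have ha' : (0:ℚ) < ((2:ℚ)^m')⁻¹ := by positivity
    constructor
    · -- `true` (P) case
      intro ht ht' hw
      simp only [List.tail_cons] at ht ht'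
      rcases eq_or_ne rest [] with rfl | hr <;> rcases eq_or_ne rest' [] with rfl | hr'
      · rw [Wv_single, Wv_single] at hw
        have hmm : m < m' := by exact_mod_cast (by linarith : (m:ℚ) < m')
        have := inv_pow_lt' hmm
        simp only [gf, if_true]
        norm_num
        linarith
      · obtain ⟨hl', hu'⟩ := Wv_cons_lt m' rest' hr' ht'
        rw [Wv_single] at hw
        have hmm : m < m' := by
          have : (m:ℚ) < m' := by push_cast at hw; linarith
          exact_mod_cast this
        obtain ⟨hg0, hg1, _, _⟩ := gf_bounds rest' hr' ht'
        have h2 := inv_pow_two_le' hmm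
        simp only [gf, if_true]
        nlinarith [mul_pos ha' hg0]
      · obtain ⟨hl, hu⟩ := Wv_cons_lt m rest hr ht
        rw [Wv_single] at hw
        have hmm : m ≤ m' := by
          have : (m:ℚ) < (m':ℚ)+1 := by push_cast at hw ⊢; linarith
          exact_mod_cast Nat.lt_succ_iff.mp (by exact_mod_cast this)
        obtain ⟨hg0, hg1, _, _⟩ := gf_bounds rest hr ht
        have h2 := inv_pow_le' hmm
        simp only [gf, if_true]
        nlinarith
      · obtain ⟨hl, hu⟩ := Wv_cons_lt m rest hr ht
        obtain ⟨hl', hu'⟩ := Wv_cons_lt m' rest' hr' ht'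
        have hmm : m ≤ m' := by
          have : (m:ℚ) < (m':ℚ)+1 := by linarith
          exact_mod_cast Nat.lt_succ_iff.mp (by exact_mod_cast this)
        obtain ⟨hg0, hg1, _, _⟩ := gf_bounds rest hr ht
        obtain ⟨hg0', hg1', _, _⟩ := gf_bounds rest' hr' ht'
        rcases lt_or_eq_of_le hmm with hlt | rfl
        · have h2 := inv_pow_two_le' hlt
          simp only [gf, if_true]
          nlinarith
        · have hwr : Wv rest' < Wv rest := by
            have h1 : (1:ℚ) < Wv rest := Wv_gt_one rest hr ht
            have h1' : (1:ℚ) < Wv rest' := Wv_gt_one rest' hr' ht'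
            have hinv : (Wv rest)⁻¹ < (Wv rest')⁻¹ := by
              simp only [Wv] at hw; linarith
            exact (inv_lt_inv₀ (by linarith) (by linarith)).mp hinv
          have hQ := (ih rest' rest (by omega) hr' hr).2 ht' ht hwr
          simp only [gf, if_true]
          nlinarith
    · -- `false` (Q) case
      intro ht ht' hw
      have htt : ∀ x ∈ rest, 1 ≤ x := fun x hx => ht x (by simp [hx])
      have htt' : ∀ x ∈ rest', 1 ≤ x := fun x hx => ht' x (by simp [hx])
      have hm1 : 1 ≤ m := ht m (by simp)
      have hm1' : 1 ≤ m' := ht' m' (by simp)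
      rcases eq_or_ne rest [] with rfl | hr <;> rcases eq_or_ne rest' [] with rfl | hr'
      · rw [Wv_single, Wv_single] at hw
        have hmm : m < m' := by exact_mod_cast (by linarith : (m:ℚ) < m')
        have := inv_pow_lt' hmm
        simp only [gf, Bool.false_eq_true, if_false]
        norm_num
        linarith
      · obtain ⟨hl', hu'⟩ := Wv_cons_lt m' rest' hr' htt'
        rw [Wv_single] at hw
        have hmm : m < m' := by
          have : (m:ℚ) < m' := by push_cast at hw; linarith
          exact_mod_cast this
        obtain ⟨_, _, hgt1', hgt2'⟩ := gf_bounds rest' hr' htt'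
        have h2 := inv_pow_two_le' hmm
        simp only [gf, Bool.false_eq_true, if_false]
        norm_num
        nlinarith
      · obtain ⟨hl, hu⟩ := Wv_cons_lt m rest hr htt
        rw [Wv_single] at hw
        have hmm : m ≤ m' := by
          have : (m:ℚ) < (m':ℚ)+1 := by linarith
          exact_mod_cast Nat.lt_succ_iff.mp (by exact_mod_cast this)
        obtain ⟨_, _, hgt1, hgt2⟩ := gf_bounds rest hr htt
        have h2 := inv_pow_le' hmm
        simp only [gf, Bool.false_eq_true, if_false]
        norm_num
        nlinarith
      · obtain ⟨hl, hu⟩ := Wv_cons_lt m rest hr htt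
        obtain ⟨hl', hu'⟩ := Wv_cons_lt m' rest' hr' htt'
        have hmm : m ≤ m' := by
          have : (m:ℚ) < (m':ℚ)+1 := by linarith
          exact_mod_cast Nat.lt_succ_iff.mp (by exact_mod_cast this)
        obtain ⟨_, _, hgt1, hgt2⟩ := gf_bounds rest hr htt
        obtain ⟨_, _, hgt1', hgt2'⟩ := gf_bounds rest' hr' htt'
        rcases lt_or_eq_of_le hmm with hlt | rfl
        · have h2 := inv_pow_two_le' hlt
          simp only [gf, Bool.false_eq_true, if_false]
          nlinarith
        · have hwr : Wv rest' < Wv rest := by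
            have h1 : (1:ℚ) < Wv rest := Wv_gt_one rest hr htt
            have h1' : (1:ℚ) < Wv rest' := Wv_gt_one rest' hr' htt'
            have hinv : (Wv rest)⁻¹ < (Wv rest')⁻¹ := by
              simp only [Wv] at hw; linarith
            exact (inv_lt_inv₀ (by linarith) (by linarith)).mp hinv
          have hP := (ih rest' rest (by omega) hr' hr).1
            (fun x hx => htt' x (List.mem_of_mem_tail hx))
            (fun x hx => htt x (List.mem_of_mem_tail hx)) hwr
          simp only [gf, Bool.false_eq_true, if_false]
          nlinarith

lemma getLastD_congr : ∀ (l : List ℕ), l ≠ [] → ∀ a b : ℕ, l.getLastD a = l.getLastD b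
  | [], h, _, _ => absurd rfl h
  | [_], _, _, _ => rfl
  | _ :: _ :: _, _, a, b => by
      rw [List.getLastD_cons]
      conv_rhs => rw [List.getLastD_cons]

lemma admissible_tail {k : ℕ} {rest : List ℕ} (h : CFAdmissible (k :: rest))
    (hne : rest ≠ []) : CFAdmissible rest := by
  obtain ⟨_, _, hmid, hlast⟩ := h
  have hgl : (k :: rest).getLastD 0 = rest.getLastD 0 := by
    rw [List.getLastD_cons, getLastD_congr rest hne k 0]
  refine ⟨hne, ?_, ?_, ?_⟩
  · intro hlen
    rcases rest with _ | ⟨q, rest2⟩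
    · simp at hlen
    · rcases rest2 with _ | _
      · have := hlast (by simp)
        rw [hgl] at this
        have hq : ([q] : List ℕ).getLastD 0 = q := rfl
        rw [hq] at this
        simpa using by omega
      · simp at hlen
  · intro i hi hilen
    have := hmid (i+1) (by omega) (by simp; omega)
    simpa using this
  · intro hlen
    have := hlast (by simp; omega)
    rwa [hgl] at this

lemma adj_all : ∀ ks : List ℕ, CFAdmissible ks → 1 ≤ ks.getD 0 0 → 2 ≤ ks.getLastD 0 →
    ∀ x ∈ ks.dropLast ++ [ks.getLastD 0 - 1], 1 ≤ x := by
  intro ks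
  induction ks with
  | nil => intro h; exact absurd rfl h.1
  | cons k rest ih =>
    intro h hhead hlast x hx
    rcases eq_or_ne rest [] with rfl | hne
    · simp only [List.dropLast_singleton, List.nil_append, List.mem_singleton] at hx
      subst hx
      simp only [List.getLastD] at hlast ⊢
      omega
    · have hgl : (k :: rest).getLastD 0 = rest.getLastD 0 := by
        rw [List.getLastD_cons, getLastD_congr rest hne k 0]
      have hdl : (k :: rest).dropLast = k :: rest.dropLast := by
        rcases rest with _ | _
        · exact absurd rfl hne
        · simp
      rw [hdl, hgl, List.cons_append, List.mem_cons] at hx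
      rcases hx with rfl | hx
      · simpa using hhead
      · have hrest := admissible_tail h hne
        have hrh : 1 ≤ rest.getD 0 0 := by
          rcases rest with _ | ⟨q, rest2⟩
          · exact absurd rfl hne
          rcases rest2 with _ | _
          · have := h.2.2.2 (by simp)
            have hq : ([k, q] : List ℕ).getLastD 0 = q := rfl
            rw [hq] at this
            simpa using by omega
          · have := h.2.2.1 1 le_rfl (by simp)
            simpa using this
        have hrl : 2 ≤ rest.getLastD 0 := by
          have := h.2.2.2 (by simp [Nat.succ_le_iff, List.length_pos_iff, hne])
          rwa [hgl] at this
        exact ih hrest hrh hrl x hx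

lemma adj_tail : ∀ ks : List ℕ, CFAdmissible ks →
    ∀ x ∈ (ks.dropLast ++ [ks.getLastD 0 - 1]).tail, 1 ≤ x := by
  intro ks h x hx
  rcases ks with _ | ⟨k, rest⟩
  · exact absurd rfl h.1
  rcases eq_or_ne rest [] with rfl | hne
  · simp at hx
  · have hgl : (k :: rest).getLastD 0 = rest.getLastD 0 := by
      rw [List.getLastD_cons, getLastD_congr rest hne k 0]
    have hdl : (k :: rest).dropLast = k :: rest.dropLast := by
      rcases rest with _ | _
      · exact absurd rfl hne
      · simp
    rw [hdl, hgl, List.cons_append, List.tail_cons] at hx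
    have hrest := admissible_tail h hne
    have hrh : 1 ≤ rest.getD 0 0 := by
      rcases rest with _ | ⟨q, rest2⟩
      · exact absurd rfl hne
      rcases rest2 with _ | _
      · have := h.2.2.2 (by simp)
        have hq : ([k, q] : List ℕ).getLastD 0 = q := rfl
        rw [hq] at this
        simpa using by omega
      · have := h.2.2.1 1 le_rfl (by simp)
        simpa using this
    have hrl : 2 ≤ rest.getLastD 0 := by
      have := h.2.2.2 (by simp [Nat.succ_le_iff, List.length_pos_iff, hne])
      rwa [hgl] at this
    exact adj_all rest hrest hrh hrl x hx

lemma adj_cf : ∀ ks : List ℕ, CFAdmissible ks →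
    cf (ks.map (fun q => (q : ℚ))) = Wv (ks.dropLast ++ [ks.getLastD 0 - 1]) := by
  intro ks
  induction ks with
  | nil => intro h; exact absurd rfl h.1
  | cons k rest ih =>
    intro h
    rcases eq_or_ne rest [] with rfl | hne
    · have hk : 1 ≤ k := h.2.1 (by simp)
      simp only [List.dropLast_singleton, List.nil_append, List.getLastD, List.map_cons,
        List.map_nil]
      show (k:ℚ) = Wv [k-1]
      simp only [Wv, inv_one]
      have : ((k-1 : ℕ) : ℚ) = (k:ℚ) - 1 := by push_cast [hk]; ring
      rw [this]; ring
    · have hrest := admissible_tail h hne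
      have ihB := ih hrest
      have hgl : (k :: rest).getLastD 0 = rest.getLastD 0 := by
        rw [List.getLastD_cons, getLastD_congr rest hne k 0]
      have hdl : (k :: rest).dropLast = k :: rest.dropLast := by
        rcases rest with _ | _
        · exact absurd rfl hne
        · simp
      rw [hdl, hgl]
      have hcf : cf ((k::rest).map (fun q => (q:ℚ)))
          = k + (cf (rest.map (fun q => (q:ℚ))))⁻¹ := by
        rcases rest with _ | ⟨a, l⟩
        · exact absurd rfl hne
        · rfl
      rw [hcf, ihB]
      show _ = Wv (k :: (rest.dropLast ++ [rest.getLastD 0 - 1]))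
      rfl

end Aux

/-- Theorem 3.1(c): `f` is order-preserving: if admissible continued fractions
satisfy `v < v'` as rationals, then `r(f(v)) < r(f(v'))`. -/
theorem stmt18 (ks ks' : List ℕ) (h : CFAdmissible ks) (h' : CFAdmissible ks')
    (hlt : cf (ks.map (fun q => (q : ℚ))) < cf (ks'.map (fun q => (q : ℚ)))) :
    rval (cfToStr ks) < rval (cfToStr ks') := by
  rw [cfToStr, cfToStr, blockStr_eq_bstr, blockStr_eq_bstr, rval_bstr, rval_bstr]
  refine (main_ind ((ks.dropLast ++ [ks.getLastD 0 - 1]).length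
      + (ks'.dropLast ++ [ks'.getLastD 0 - 1]).length) _ _ le_rfl (by simp) (by simp)).1
    (adj_tail ks h) (adj_tail ks' h') ?_
  rw [← adj_cf ks h, ← adj_cf ks' h']
  exact hlt
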